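/- ∫_{−1}^∞ dx/√(x³+1) = B(1/2, 1/3), where B is the Beta function. -/

import Mathlib

open MeasureTheory Set

lemma beta_cpow_eq {a b : ℝ} (t : ℝ) (ht : t ∈ Ioo (0:ℝ) 1) :
    (t:ℂ) ^ ((a:ℂ)-1) * (1-(t:ℂ)) ^ ((b:ℂ)-1) = ((t ^ (a-1) * (1-t) ^ (b-1) : ℝ) : ℂ) := by
  obtain ⟨h0, h1⟩ := ht
  rw [Complex.ofReal_mul, Complex.ofReal_cpow h0.le, Complex.ofReal_cpow (by linarith),
    Complex.ofReal_sub, Complex.ofReal_sub, Complex.ofReal_one]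
  push_cast
  ring

lemma beta_integrable {a b : ℝ} (ha : 0 < a) (hb : 0 < b) :
    IntegrableOn (fun t : ℝ => t ^ (a-1) * (1-t) ^ (b-1)) (Ioo 0 1) := by
  have h := (Complex.betaIntegral_convergent (u := a) (v := b) (by simpa using ha)
    (by simpa using hb)).1
  have h2 : IntegrableOn (fun t : ℝ => ‖(t:ℂ) ^ ((a:ℂ)-1) * (1-(t:ℂ)) ^ ((b:ℂ)-1)‖) (Ioo 0 1) :=
    (h.mono_set Ioo_subset_Ioc_self).norm
  refine h2.congr_fun (fun t ht => ?_) measurableSet_Ioo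
  beta_reduce
  rw [beta_cpow_eq t ht, Complex.norm_real, Real.norm_eq_abs, abs_of_nonneg
    (mul_nonneg (Real.rpow_nonneg ht.1.le _) (Real.rpow_nonneg (by linarith [ht.2]) _))]

lemma real_beta {a b : ℝ} (ha : 0 < a) (hb : 0 < b) :
    ∫ t in Ioo (0:ℝ) 1, t ^ (a-1) * (1-t) ^ (b-1) =
      Real.Gamma a * Real.Gamma b / Real.Gamma (a+b) := by
  have key := Complex.Gamma_mul_Gamma_eq_betaIntegral (s := a) (t := b)
    (by simpa using ha) (by simpa using hb)
  have hbeta : Complex.betaIntegral a b =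
      ((∫ t in Ioo (0:ℝ) 1, t ^ (a-1) * (1-t) ^ (b-1) : ℝ) : ℂ) := by
    rw [Complex.betaIntegral, intervalIntegral.integral_of_le (by norm_num : (0:ℝ) ≤ 1),
      MeasureTheory.integral_Ioc_eq_integral_Ioo]
    rw [setIntegral_congr_fun measurableSet_Ioo (fun t ht => beta_cpow_eq (a := a) (b := b) t ht)]
    exact integral_ofReal
  rw [hbeta, ← Complex.ofReal_add, Complex.Gamma_ofReal, Complex.Gamma_ofReal,
    Complex.Gamma_ofReal, ← Complex.ofReal_mul, ← Complex.ofReal_mul] at key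
  have := Complex.ofReal_injective key
  have hG : Real.Gamma (a+b) ≠ 0 := (Real.Gamma_pos_of_pos (by linarith)).ne'
  field_simp
  linarith [this]

noncomputable def gfun : ℝ → ℝ := fun u => u ^ (-(1/2):ℝ) * |u - 1| ^ (-(2/3):ℝ)

lemma inv_image : (fun v : ℝ => v⁻¹) '' Ioo 0 1 = Ioi (1:ℝ) := by
  ext u
  simp only [mem_image, mem_Ioo, mem_Ioi]
  constructor
  · rintro ⟨v, ⟨h0, h1⟩, rfl⟩
    have : v * v⁻¹ = 1 := mul_inv_cancel₀ h0.ne'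
    nlinarith [inv_pos.mpr h0]
  · intro hu
    have hu0 : 0 < u := by linarith
    have : u * u⁻¹ = 1 := mul_inv_cancel₀ hu0.ne'
    exact ⟨u⁻¹, ⟨by positivity, by nlinarith [inv_pos.mpr hu0]⟩, inv_inv u⟩

lemma ptJ2 {v : ℝ} (hv : v ∈ Ioo (0:ℝ) 1) :
    |-(v^2)⁻¹| * ((v⁻¹) ^ (-(1/2):ℝ) * (v⁻¹ - 1) ^ (-(2/3):ℝ))
      = v ^ (-(5/6):ℝ) * (1-v) ^ (-(2/3):ℝ) := by
  obtain ⟨h0, h1⟩ := hv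
  have h2 : |-(v^2)⁻¹| = v ^ ((-2):ℝ) := by
    rw [abs_neg, abs_of_nonneg (by positivity), ← Real.rpow_natCast v 2,
      ← Real.rpow_neg h0.le]
    norm_num
  have h3 : (v⁻¹) ^ (-(1/2):ℝ) = v ^ ((1/2):ℝ) := by
    rw [Real.inv_rpow h0.le, ← Real.rpow_neg h0.le]; norm_num
  have hinv : v⁻¹ - 1 = (1-v) * v⁻¹ := by field_simp
  have h4 : (v⁻¹) ^ (-(2/3):ℝ) = v ^ ((2/3):ℝ) := by
    rw [Real.inv_rpow h0.le, ← Real.rpow_neg h0.le]; norm_num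
  rw [h2, h3, hinv, Real.mul_rpow (by linarith) (by positivity), h4]
  calc v ^ ((-2):ℝ) * (v ^ ((1/2):ℝ) * ((1-v) ^ (-(2/3):ℝ) * v ^ ((2/3):ℝ)))
      = v ^ ((-2):ℝ) * v ^ ((1/2):ℝ) * v ^ ((2/3):ℝ) * (1-v) ^ (-(2/3):ℝ) := by ring
    _ = v ^ ((-2) + (1/2) + (2/3) : ℝ) * (1-v) ^ (-(2/3):ℝ) := by
        rw [← Real.rpow_add h0, ← Real.rpow_add h0]
    _ = v ^ (-(5/6):ℝ) * (1-v) ^ (-(2/3):ℝ) := by norm_num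

lemma hasDeriv_inv' {v : ℝ} (hv : v ∈ Ioo (0:ℝ) 1) :
    HasDerivWithinAt (fun y : ℝ => y⁻¹) (-(v^2)⁻¹) (Ioo 0 1) v :=
  (hasDerivAt_inv hv.1.ne').hasDerivWithinAt

lemma J2_eq : (∫ u in Ioi (1:ℝ), u ^ (-(1/2):ℝ) * (u-1) ^ (-(2/3):ℝ))
    = ∫ v in Ioo (0:ℝ) 1, v ^ (-(5/6):ℝ) * (1-v) ^ (-(2/3):ℝ) := by
  rw [← inv_image, integral_image_eq_integral_abs_deriv_smul measurableSet_Ioo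
    (fun v hv => hasDeriv_inv' hv) (inv_injective.injOn)]
  refine setIntegral_congr_fun measurableSet_Ioo (fun v hv => ?_)
  simpa [smul_eq_mul, mul_assoc] using ptJ2 hv

lemma cube_image : (fun x : ℝ => x ^ 3 + 1) '' Ioi (-1) = Ioi (0:ℝ) := by
  have hmono : StrictMono (fun x : ℝ => x ^ 3) := Odd.strictMono_pow ⟨1, by norm_num⟩
  ext u
  simp only [mem_image, mem_Ioi]
  constructor
  · rintro ⟨x, hx, rfl⟩
    have := hmono hx
    simp only at this
    nlinarith
  · intro hu
    rcases le_or_gt 1 u with h | h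
    · refine ⟨(u-1) ^ ((1/3):ℝ), ?_, ?_⟩
      · have : (0:ℝ) ≤ (u-1) ^ ((1/3):ℝ) := Real.rpow_nonneg (by linarith) _
        linarith
      · have : ((u-1) ^ ((1/3):ℝ)) ^ (3:ℕ) = u - 1 := by
          rw [← Real.rpow_natCast _ 3, ← Real.rpow_mul (by linarith)]; norm_num
        rw [this]; ring
    · refine ⟨-((1-u) ^ ((1/3):ℝ)), ?_, ?_⟩
      · have : (1-u) ^ ((1/3):ℝ) < 1 :=
          Real.rpow_lt_one (by linarith) (by linarith) (by norm_num)
        linarith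
      · have hc : ((1-u) ^ ((1/3):ℝ)) ^ (3:ℕ) = 1 - u := by
          rw [← Real.rpow_natCast _ 3, ← Real.rpow_mul (by linarith)]; norm_num
        have := Odd.neg_pow (⟨1, by norm_num⟩ : Odd 3) ((1-u) ^ ((1/3):ℝ))
        rw [this, hc]; ring

lemma cube_injOn : InjOn (fun x : ℝ => x ^ 3 + 1) (Ioi (-1)) := by
  have hmono : StrictMono (fun x : ℝ => x ^ 3 + 1) :=
    fun a b hab => by simpa using (Odd.strictMono_pow (⟨1, by norm_num⟩ : Odd 3) hab)
  exact hmono.injective.injOn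

lemma cube_deriv {x : ℝ} (_ : x ∈ Ioi (-1:ℝ)) :
    HasDerivWithinAt (fun x : ℝ => x ^ 3 + 1) (3 * x ^ 2) (Ioi (-1)) x := by
  have := ((hasDerivAt_pow 3 x).add_const 1).hasDerivWithinAt (s := Ioi (-1))
  simpa using this

lemma pt_main {x : ℝ} (hx : x ∈ Ioi (-1:ℝ)) (hx0 : x ≠ 0) :
    |3 * x ^ 2| • gfun (x ^ 3 + 1) = 3 * (1 / Real.sqrt (x ^ 3 + 1)) := by
  have ht : (0:ℝ) < x ^ 3 + 1 := by
    have hmono : StrictMono (fun x : ℝ => x ^ 3) := Odd.strictMono_pow ⟨1, by norm_num⟩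
    have := hmono (show (-1:ℝ) < x from hx); simp only at this; nlinarith
  have habs : |x ^ 3 + 1 - 1| = |x| ^ (3:ℕ) := by
    rw [show x ^ 3 + 1 - 1 = x ^ 3 by ring, abs_pow]
  have h1 : (|x| ^ (3:ℕ)) ^ (-(2/3):ℝ) = (x ^ 2)⁻¹ := by
    rw [← Real.rpow_natCast |x| 3, ← Real.rpow_mul (abs_nonneg x),
      show ((3:ℕ):ℝ) * (-(2/3)) = -2 by norm_num, Real.rpow_neg (abs_nonneg x),
      show ((2:ℝ)) = ((2:ℕ):ℝ) by norm_num, Real.rpow_natCast, sq_abs]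
  have h2 : (x ^ 3 + 1) ^ (-(1/2):ℝ) = 1 / Real.sqrt (x ^ 3 + 1) := by
    rw [Real.sqrt_eq_rpow, Real.rpow_neg ht.le]; norm_num
  simp only [gfun, smul_eq_mul, habs, h1, h2, abs_of_nonneg (by positivity : (0:ℝ) ≤ 3 * x ^ 2)]
  field_simp

lemma gamma_alg : Real.Gamma (1/6) * Real.Gamma (1/3) / Real.Gamma (1/6 + 1/3)
    = 2 * (Real.Gamma (1/2) * Real.Gamma (1/3) / Real.Gamma (1/2 + 1/3)) := by
  have h16 := Real.Gamma_mul_Gamma_one_sub (1/6)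
  rw [show (1:ℝ) - 1/6 = 5/6 by norm_num,
    show (Real.pi) * (1/6) = Real.pi / 6 by ring, Real.sin_pi_div_six] at h16
  have hhalf : Real.Gamma (1/2) ^ 2 = Real.pi := by
    rw [Real.Gamma_one_half_eq, Real.sq_sqrt Real.pi_pos.le]
  rw [show (1:ℝ)/6 + 1/3 = 1/2 by norm_num, show (1:ℝ)/2 + 1/3 = 5/6 by norm_num]
  have hG2 : Real.Gamma (1/2) > 0 := Real.Gamma_pos_of_pos (by norm_num)
  have hG56 : Real.Gamma (5/6) > 0 := Real.Gamma_pos_of_pos (by norm_num)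
  have h2pi : Real.Gamma (1/6) * Real.Gamma (5/6) = 2 * Real.pi := by
    rw [h16]; ring
  field_simp
  nlinarith [h2pi, hhalf, Real.Gamma_pos_of_pos (show (0:ℝ) < 1/3 by norm_num)]

lemma J2_integrable :
    IntegrableOn (fun u : ℝ => u ^ (-(1/2):ℝ) * (u-1) ^ (-(2/3):ℝ)) (Ioi 1) := by
  rw [← inv_image, integrableOn_image_iff_integrableOn_abs_deriv_smul measurableSet_Ioo
    (fun v hv => hasDeriv_inv' hv) inv_injective.injOn]
  have hb := beta_integrable (show (0:ℝ) < 1/6 by norm_num) (show (0:ℝ) < 1/3 by norm_num)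
  refine hb.congr_fun (fun v hv => ?_) measurableSet_Ioo
  rw [show (1/6-1:ℝ) = -(5/6) by norm_num, show (1/3-1:ℝ) = -(2/3) by norm_num]
  simpa [smul_eq_mul, mul_assoc] using (ptJ2 hv).symm

lemma gfun_eqOn_Ioo : EqOn (fun t : ℝ => t ^ ((1:ℝ)/2-1) * (1-t) ^ ((1:ℝ)/3-1)) gfun (Ioo 0 1) := by
  intro u hu
  simp only [gfun]
  rw [show ((1:ℝ)/2-1) = -(1/2) by norm_num, show ((1:ℝ)/3-1) = -(2/3) by norm_num,
    abs_of_neg (by linarith [hu.2] : u - 1 < 0), neg_sub]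

lemma gfun_eqOn_Ioi : EqOn (fun u : ℝ => u ^ (-(1/2):ℝ) * (u-1) ^ (-(2/3):ℝ)) gfun (Ioi 1) := by
  intro u hu
  simp only [gfun]
  rw [abs_of_pos (by simp only [mem_Ioi] at hu; linarith : (0:ℝ) < u - 1)]

lemma gfun_int_Ioo : IntegrableOn gfun (Ioo 0 1) :=
  (beta_integrable (show (0:ℝ) < 1/2 by norm_num) (show (0:ℝ) < 1/3 by norm_num)).congr_fun
    gfun_eqOn_Ioo measurableSet_Ioo

lemma gfun_int_Ici : IntegrableOn gfun (Ici 1) := by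
  rw [integrableOn_Ici_iff_integrableOn_Ioi]
  exact J2_integrable.congr_fun gfun_eqOn_Ioi measurableSet_Ioi

lemma gfun_Ioo_val : ∫ u in Ioo (0:ℝ) 1, gfun u
    = Real.Gamma (1/2) * Real.Gamma (1/3) / Real.Gamma (1/2 + 1/3) := by
  rw [← real_beta (show (0:ℝ) < 1/2 by norm_num) (show (0:ℝ) < 1/3 by norm_num)]
  exact (setIntegral_congr_fun measurableSet_Ioo gfun_eqOn_Ioo).symm

lemma gfun_Ioi_val : ∫ u in Ioi (1:ℝ), gfun u
    = Real.Gamma (1/6) * Real.Gamma (1/3) / Real.Gamma (1/6 + 1/3) := by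
  rw [← setIntegral_congr_fun measurableSet_Ioi gfun_eqOn_Ioi, J2_eq,
    ← real_beta (show (0:ℝ) < 1/6 by norm_num) (show (0:ℝ) < 1/3 by norm_num)]
  refine setIntegral_congr_fun measurableSet_Ioo (fun v hv => ?_)
  rw [show ((1:ℝ)/6-1) = -(5/6) by norm_num, show ((1:ℝ)/3-1) = -(2/3) by norm_num]

theorem stmt3 :
    (∫ x in Ioi (-1 : ℝ), 1 / Real.sqrt (x ^ 3 + 1))
      = Real.Gamma (1 / 2) * Real.Gamma (1 / 3) / Real.Gamma (1 / 2 + 1 / 3) := by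
  have hcov : ∫ u in Ioi (0:ℝ), gfun u
      = ∫ x in Ioi (-1:ℝ), |3 * x ^ 2| • gfun (x ^ 3 + 1) := by
    rw [← cube_image, integral_image_eq_integral_abs_deriv_smul measurableSet_Ioi
      (fun x hx => cube_deriv hx) cube_injOn]
  have hae : ∫ x in Ioi (-1:ℝ), |3 * x ^ 2| • gfun (x ^ 3 + 1)
      = ∫ x in Ioi (-1:ℝ), 3 * (1 / Real.sqrt (x ^ 3 + 1)) := by
    refine setIntegral_congr_ae measurableSet_Ioi ?_
    have h0 : ∀ᵐ (x : ℝ), x ≠ 0 := by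
      rw [ae_iff]
      simp
    filter_upwards [h0] with x hx0 hmem
    exact pt_main hmem hx0
  have h3I : ∫ x in Ioi (-1:ℝ), 3 * (1 / Real.sqrt (x ^ 3 + 1))
      = 3 * ∫ x in Ioi (-1:ℝ), 1 / Real.sqrt (x ^ 3 + 1) := integral_const_mul 3 _
  have hsplit : ∫ u in Ioi (0:ℝ), gfun u
      = (∫ u in Ioo (0:ℝ) 1, gfun u) + ∫ u in Ioi (1:ℝ), gfun u := by
    rw [← Ioo_union_Ici_eq_Ioi (show (0:ℝ) < 1 by norm_num),
      setIntegral_union (by simp [disjoint_left, mem_Ioo, mem_Ici])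
        measurableSet_Ici gfun_int_Ioo gfun_int_Ici,
      integral_Ici_eq_integral_Ioi]
  rw [gfun_Ioo_val, gfun_Ioi_val] at hsplit
  rw [hcov, hae, h3I] at hsplit
  have halg := gamma_alg
  linarith
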